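/- For any probability densities p, q with respect to μ, the supremum over all Borel discriminators D : E → [0,1] of L(D) = ∫ ln(D) p dμ + ∫ ln(1−D) q dμ lies in the interval [−ln 4, 0]. -/
import Mathlib


open MeasureTheory Real

/-- The supremum over all Borel discriminators `D : E → [0,1]` (with finite criterion)
of `L(D) = ∫ ln(D) p dμ + ∫ ln(1−D) q dμ` lies in `[−ln 4, 0]`. -/
theorem stmt2 {E : Type*} [MeasurableSpace E] (μ : Measure E) [SigmaFinite μ]
    (p q : E → ℝ) (hpm : Measurable p) (hqm : Measurable q)
    (hp0 : ∀ x, 0 ≤ p x) (hq0 : ∀ x, 0 ≤ q x)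
    (hpi : Integrable p μ) (hqi : Integrable q μ)
    (hp1 : ∫ x, p x ∂μ = 1) (hq1 : ∫ x, q x ∂μ = 1) :
    sSup {y : ℝ | ∃ D : E → ℝ, Measurable D ∧ (∀ x, D x ∈ Set.Icc (0 : ℝ) 1) ∧
        Integrable (fun x => p x * Real.log (D x)) μ ∧
        Integrable (fun x => q x * Real.log (1 - D x)) μ ∧
        y = (∫ x, p x * Real.log (D x) ∂μ) + (∫ x, q x * Real.log (1 - D x) ∂μ)}
      ∈ Set.Icc (-Real.log 4) 0 := by
  set S := {y : ℝ | ∃ D : E → ℝ, Measurable D ∧ (∀ x, D x ∈ Set.Icc (0 : ℝ) 1) ∧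
        Integrable (fun x => p x * Real.log (D x)) μ ∧
        Integrable (fun x => q x * Real.log (1 - D x)) μ ∧
        y = (∫ x, p x * Real.log (D x) ∂μ) + (∫ x, q x * Real.log (1 - D x) ∂μ)} with hS
  have hub : ∀ y ∈ S, y ≤ 0 := by
    rintro y ⟨D, hDm, hD01, hi1, hi2, rfl⟩
    have h1 : (∫ x, p x * Real.log (D x) ∂μ) ≤ 0 := by
      apply integral_nonpos
      intro x
      exact mul_nonpos_of_nonneg_of_nonpos (hp0 x)
        (Real.log_nonpos (hD01 x).1 (hD01 x).2)
    have h2 : (∫ x, q x * Real.log (1 - D x) ∂μ) ≤ 0 := by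
      apply integral_nonpos
      intro x
      refine mul_nonpos_of_nonneg_of_nonpos (hq0 x) (Real.log_nonpos ?_ ?_)
      · linarith [(hD01 x).2]
      · linarith [(hD01 x).1]
    linarith
  have hmem : (-Real.log 4) ∈ S := by
    refine ⟨fun _ => (1:ℝ)/2, measurable_const, fun x => ⟨by norm_num, by norm_num⟩,
      ?_, ?_, ?_⟩
    · simpa using hpi.mul_const (Real.log ((1:ℝ)/2))
    · have : (fun x => q x * Real.log (1 - (1:ℝ)/2)) = fun x => q x * Real.log ((1:ℝ)/2) := by
        norm_num
      rw [this]
      simpa using hqi.mul_const (Real.log ((1:ℝ)/2))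
    · have hlog : Real.log ((1:ℝ)/2) = -Real.log 2 := by
        rw [Real.log_div one_ne_zero two_ne_zero, Real.log_one]; ring
      have h4 : Real.log 4 = 2 * Real.log 2 := by
        rw [show (4:ℝ) = 2^2 by norm_num, Real.log_pow]; push_cast; ring
      have e1 : (∫ x, p x * Real.log ((1:ℝ)/2) ∂μ) = Real.log ((1:ℝ)/2) := by
        rw [integral_mul_const, hp1, one_mul]
      have e2 : (∫ x, q x * Real.log (1 - (1:ℝ)/2) ∂μ) = Real.log ((1:ℝ)/2) := by
        norm_num
        rw [integral_mul_const, hq1, one_mul]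
      rw [e1, e2, hlog, h4]; ring
  have hne : S.Nonempty := ⟨_, hmem⟩
  have hbdd : BddAbove S := ⟨0, hub⟩
  constructor
  · exact le_csSup hbdd hmem
  · exact csSup_le hne hub
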